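/- Let x ∈ ℂⁿ with ‖x‖ = 1 and let z₁, z₂ ∈ ℂⁿ satisfy max(‖z₁ − x‖, ‖z₂ − x‖) ≤ γ ≤ 1/4. Define αᵢ = (x* zᵢ)/|x* zᵢ| for i = 1,2 (well-defined since |x* zᵢ| ≥ 1/2). Then |α₁ − α₂| ≤ 4‖z₁ − z₂‖. -/

import Mathlib

/-- For a unit vector `x` and `z₁, z₂` within distance `γ ≤ 1/4` of `x`, the aligning
phases `αᵢ = (x* zᵢ)/|x* zᵢ|` satisfy `|α₁ - α₂| ≤ 4‖z₁ - z₂‖`. -/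
theorem stmt2 {n : ℕ} (x z₁ z₂ : EuclideanSpace ℂ (Fin n)) (γ : ℝ)
    (hx : ‖x‖ = 1) (h1 : ‖z₁ - x‖ ≤ γ) (h2 : ‖z₂ - x‖ ≤ γ) (hγ : γ ≤ 1 / 4) :
    ‖(inner ℂ x z₁ : ℂ) / ((‖(inner ℂ x z₁ : ℂ)‖ : ℝ) : ℂ) -
        (inner ℂ x z₂ : ℂ) / ((‖(inner ℂ x z₂ : ℂ)‖ : ℝ) : ℂ)‖ ≤ 4 * ‖z₁ - z₂‖ := by
  set a : ℂ := (inner ℂ x z₁ : ℂ) with ha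
  set b : ℂ := (inner ℂ x z₂ : ℂ) with hb
  have hγ0 : (0:ℝ) ≤ γ := le_trans (norm_nonneg _) h1
  have hxx : (inner ℂ x x : ℂ) = 1 := by
    rw [inner_self_eq_norm_sq_to_K, hx]; norm_num
  have ha1 : ‖a - 1‖ ≤ γ := by
    have h : a - 1 = (inner ℂ x (z₁ - x) : ℂ) := by rw [inner_sub_right, hxx, ha]
    rw [h]
    calc ‖(inner ℂ x (z₁ - x) : ℂ)‖ ≤ ‖x‖ * ‖z₁ - x‖ := norm_inner_le_norm x _
      _ ≤ γ := by rw [hx]; linarith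
  have hb1 : ‖b - 1‖ ≤ γ := by
    have h : b - 1 = (inner ℂ x (z₂ - x) : ℂ) := by rw [inner_sub_right, hxx, hb]
    rw [h]
    calc ‖(inner ℂ x (z₂ - x) : ℂ)‖ ≤ ‖x‖ * ‖z₂ - x‖ := norm_inner_le_norm x _
      _ ≤ γ := by rw [hx]; linarith
  have hA : (3/4 : ℝ) ≤ ‖a‖ := by
    have := norm_sub_norm_le (1:ℂ) a
    rw [norm_one, norm_sub_rev] at this
    linarith
  have hB : (3/4 : ℝ) ≤ ‖b‖ := by
    have := norm_sub_norm_le (1:ℂ) b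
    rw [norm_one, norm_sub_rev] at this
    linarith
  have hA0 : (‖a‖ : ℝ) ≠ 0 := by linarith
  have hB0 : (‖b‖ : ℝ) ≠ 0 := by linarith
  have hA0' : ((‖a‖ : ℝ) : ℂ) ≠ 0 := by exact_mod_cast hA0
  have hB0' : ((‖b‖ : ℝ) : ℂ) ≠ 0 := by exact_mod_cast hB0
  have key : a / ((‖a‖ : ℝ) : ℂ) - b / ((‖b‖ : ℝ) : ℂ)
      = (a * ((‖b‖ : ℝ) : ℂ) - b * ((‖a‖ : ℝ) : ℂ)) /
        (((‖a‖ : ℝ) : ℂ) * ((‖b‖ : ℝ) : ℂ)) := by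
    rw [div_sub_div _ _ hA0' hB0']
    ring
  have hab : ‖a - b‖ ≤ ‖z₁ - z₂‖ := by
    have h : a - b = (inner ℂ x (z₁ - z₂) : ℂ) := by rw [inner_sub_right, ha, hb]
    rw [h]
    calc ‖(inner ℂ x (z₁ - z₂) : ℂ)‖ ≤ ‖x‖ * ‖z₁ - z₂‖ := norm_inner_le_norm x _
      _ = ‖z₁ - z₂‖ := by rw [hx, one_mul]
  have hnum : ‖a * ((‖b‖ : ℝ) : ℂ) - b * ((‖a‖ : ℝ) : ℂ)‖
      ≤ 2 * ‖b‖ * ‖a - b‖ := by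
    have hsplit : a * ((‖b‖ : ℝ) : ℂ) - b * ((‖a‖ : ℝ) : ℂ)
        = (a - b) * ((‖b‖ : ℝ) : ℂ)
          + b * (((‖b‖ : ℝ) : ℂ) - ((‖a‖ : ℝ) : ℂ)) := by ring
    rw [hsplit]
    have h1' : ‖(a - b) * ((‖b‖ : ℝ) : ℂ)‖
        = ‖a - b‖ * ‖b‖ := by
      rw [norm_mul, Complex.norm_real, norm_norm]
    have h2' : ‖b * (((‖b‖ : ℝ) : ℂ) - ((‖a‖ : ℝ) : ℂ))‖
        ≤ ‖b‖ * ‖a - b‖ := by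
      rw [norm_mul]
      have : (((‖b‖ : ℝ) : ℂ) - ((‖a‖ : ℝ) : ℂ))
          = (((‖b‖ - ‖a‖ : ℝ)) : ℂ) := by push_cast; ring
      rw [this, Complex.norm_real, Real.norm_eq_abs]
      have habs : |‖b‖ - ‖a‖| ≤ ‖a - b‖ := by
        have := abs_norm_sub_norm_le b a
        have h : ‖b - a‖ = ‖a - b‖ := norm_sub_rev _ _
        linarith
      exact mul_le_mul_of_nonneg_left habs (norm_nonneg b)
    calc ‖_‖ ≤ _ := norm_add_le _ _
      _ ≤ 2 * ‖b‖ * ‖a - b‖ := by rw [h1']; linarith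
  rw [key, norm_div, norm_mul, Complex.norm_real, Complex.norm_real, norm_norm, norm_norm]
  rw [div_le_iff₀ (by positivity)]
  have hd0 : (0:ℝ) ≤ ‖a - b‖ := norm_nonneg _
  nlinarith [mul_le_mul_of_nonneg_left hab
      (by positivity : (0:ℝ) ≤ 2 * ‖b‖),
    mul_nonneg (mul_nonneg
      (by linarith : (0:ℝ) ≤ 4 * ‖a‖ - 2)
      (by linarith : (0:ℝ) ≤ ‖b‖)) (norm_nonneg (z₁ - z₂))]
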